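/- Let Φ denote the cumulative distribution function and φ the probability density function of the standard Gaussian distribution N(0,1), and define G(x) := (x·φ(x)·Φ(x) + φ(x)²) / Φ(x)². Then G(x) > 0 for every x ∈ ℝ, and there exists a constant C > 0 such that G(x) < C for every x ∈ ℝ. -/

import Mathlib

open Real MeasureTheory Set ProbabilityTheory Filter Function Topology NNReal

/-- CDF of the standard Gaussian distribution `N(0,1)`. -/
noncomputable def gaussCDF (x : ℝ) : ℝ :=
  ((ProbabilityTheory.gaussianReal 0 1) (Set.Iic x)).toReal

/-- PDF of the standard Gaussian distribution `N(0,1)`. -/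
noncomputable def gaussPDF (x : ℝ) : ℝ := ProbabilityTheory.gaussianPDFReal 0 1 x

/-- `G(x) = (x φ(x) Φ(x) + φ(x)²) / Φ(x)²`. -/
noncomputable def G (x : ℝ) : ℝ :=
  (x * gaussPDF x * gaussCDF x + (gaussPDF x) ^ 2) / (gaussCDF x) ^ 2

lemma phi_eq : gaussPDF = fun x => (Real.sqrt (2*π))⁻¹ * Real.exp (-(x^2/2)) := by
  funext x
  show (√(2 * π * (1:ℝ≥0)))⁻¹ * rexp (- (x - 0)^2 / (2 * (1:ℝ≥0))) = _
  norm_num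
  exact Or.inl (by ring)

lemma phi_pos (x : ℝ) : 0 < gaussPDF x := gaussianPDFReal_pos 0 1 x one_ne_zero

lemma phi_cont : Continuous gaussPDF := by
  rw [phi_eq]; continuity

lemma phi_integrable : Integrable gaussPDF := integrable_gaussianPDFReal 0 1

lemma hasDerivAt_phi (x : ℝ) : HasDerivAt gaussPDF (-x * gaussPDF x) x := by
  have h1 : HasDerivAt (fun t : ℝ => -(t^2/2)) (-x) x := by
    have := ((hasDerivAt_pow 2 x).div_const 2).fun_neg
    refine this.congr_deriv ?_
    ring
  have h2 := (h1.exp).const_mul ((Real.sqrt (2*π))⁻¹)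
  rw [phi_eq]
  refine h2.congr_deriv ?_
  simp only []
  ring

lemma tendsto_phi_atBot : Tendsto gaussPDF atBot (𝓝 0) := by
  rw [phi_eq]
  have h1 : Tendsto (fun t : ℝ => -(t^2/2)) atBot atBot := by
    have h2 : Tendsto (fun t : ℝ => t^2) atBot atTop := by
      have ha : Tendsto (fun t : ℝ => |t|^2) atBot atTop :=
        (tendsto_pow_atTop (by norm_num : 2 ≠ 0)).comp tendsto_abs_atBot_atTop
      exact ha.congr fun t => sq_abs t
    exact tendsto_neg_atTop_atBot.comp (h2.atTop_div_const (by norm_num))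
  have := Real.tendsto_exp_atBot.comp h1
  simpa using this.const_mul ((Real.sqrt (2*π))⁻¹)

lemma cdf_eq (x : ℝ) : gaussCDF x = ∫ t in Iic x, gaussPDF t := by
  rw [gaussCDF, gaussianReal_apply_eq_integral 0 one_ne_zero, ENNReal.toReal_ofReal]
  · rfl
  · exact integral_nonneg fun t => (phi_pos t).le

lemma cdf_pos (x : ℝ) : 0 < gaussCDF x := by
  rw [cdf_eq]
  rw [setIntegral_pos_iff_support_of_nonneg_ae
    (ae_of_all _ fun t => (phi_pos t).le) phi_integrable.integrableOn]
  have hs : support gaussPDF = univ := eq_univ_of_forall fun t => (phi_pos t).ne'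
  rw [hs, univ_inter, Real.volume_Iic]
  simp

lemma cdf_le_one (x : ℝ) : gaussCDF x ≤ 1 := by
  have h : (gaussianReal 0 1) (Iic x) ≤ 1 := prob_le_one
  unfold gaussCDF
  exact ENNReal.toReal_le_of_le_ofReal one_pos.le (by simpa using h)

lemma cdf_mono {x y : ℝ} (h : x ≤ y) : gaussCDF x ≤ gaussCDF y :=
  ENNReal.toReal_mono (measure_ne_top _ _) (measure_mono (Iic_subset_Iic.2 h))

lemma integrable_id_mul_phi : Integrable (fun t : ℝ => t * gaussPDF t) := by
  have h := integrable_rpow_mul_exp_neg_mul_sq (b := 1/2) (by norm_num) (s := 1) (by norm_num)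
  have h2 := h.const_mul ((Real.sqrt (2*π))⁻¹)
  refine h2.congr (ae_of_all _ fun t => ?_)
  rw [phi_eq]
  simp only [Real.rpow_one]
  ring_nf

lemma integral_id_mul_phi (x : ℝ) : ∫ t in Iic x, t * gaussPDF t = -gaussPDF x := by
  have h := integral_Iic_of_hasDerivAt_of_tendsto' (a := x)
    (f := fun t => -gaussPDF t) (f' := fun t => t * gaussPDF t)
    (fun t _ => by simpa using (hasDerivAt_phi t).fun_neg)
    integrable_id_mul_phi.integrableOn
    (by simpa using tendsto_phi_atBot.neg)
  simpa using h

lemma mills_upper {x : ℝ} (hx : x < 0) : gaussCDF x < gaussPDF x / (-x) := by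
  have hxne : x ≠ 0 := hx.ne
  have hint1 : Integrable (fun t : ℝ => t / x * gaussPDF t) := by
    refine (integrable_id_mul_phi.const_mul x⁻¹).congr (ae_of_all _ fun t => ?_)
    ring
  have key : (0:ℝ) < ∫ t in Iic x, (t / x * gaussPDF t - gaussPDF t) := by
    rw [setIntegral_pos_iff_support_of_nonneg_ae]
    · refine lt_of_lt_of_le ?_ (measure_mono (?_ : Iio x ⊆ _))
      · rw [Real.volume_Iio]; simp
      · intro t ht
        refine ⟨?_, le_of_lt (mem_Iio.1 ht)⟩
        have h1 : 1 < t / x := by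
          rw [lt_div_iff_of_neg hx]; linarith [ht.out]
        have := phi_pos t
        simp only [mem_support]
        nlinarith
    · rw [EventuallyLE, ae_restrict_iff' measurableSet_Iic]
      refine ae_of_all _ fun t ht => ?_
      have h1 : 1 ≤ t / x := by
        rw [le_div_iff_of_neg hx]; simpa using ht.out
      have := phi_pos t
      simp only [Pi.zero_apply]
      nlinarith
    · exact (hint1.sub phi_integrable).integrableOn
  rw [integral_sub hint1.integrableOn phi_integrable.integrableOn] at key
  have heq : ∫ t in Iic x, t / x * gaussPDF t = gaussPDF x / (-x) := by
    have : ∀ t : ℝ, t / x * gaussPDF t = x⁻¹ * (t * gaussPDF t) := fun t => by ring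
    simp_rw [this]
    rw [integral_const_mul, integral_id_mul_phi]
    rw [eq_div_iff (neg_ne_zero.mpr hxne)]
    field_simp
  rw [heq] at key
  rw [cdf_eq]
  linarith

lemma mills_lower {x : ℝ} (hx : x < 0) : (-x) * gaussPDF x / (x^2+1) ≤ gaussCDF x := by
  set ψ : ℝ → ℝ := fun t => gaussPDF t * (1 - 2/(t^2+1)^2) with hψ
  have hd : ∀ t : ℝ, HasDerivAt (fun s => -s * gaussPDF s / (s^2+1)) (ψ t) t := by
    intro t
    have ht1 : (0:ℝ) < t^2+1 := by positivity
    have h1 : HasDerivAt (fun s : ℝ => -s / (s^2+1)) ((t^2-1)/(t^2+1)^2) t := by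
      have hnum : HasDerivAt (fun s : ℝ => -s) (-1) t := (hasDerivAt_id t).neg
      have hden : HasDerivAt (fun s : ℝ => s^2+1) (2*t) t := by
        simpa using (hasDerivAt_pow 2 t).add_const 1
      have := hnum.fun_div hden ht1.ne'
      refine this.congr_deriv ?_
      field_simp
      ring
    have h2 := h1.fun_mul (hasDerivAt_phi t)
    have heq : (fun s : ℝ => -s / (s^2+1) * gaussPDF s) = fun s => -s * gaussPDF s / (s^2+1) := by
      funext s; ring
    rw [heq] at h2
    refine h2.congr_deriv ?_
    have hne : (t^2+1 : ℝ) ≠ 0 := ht1.ne'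
    simp only [hψ]
    field_simp
    ring
  have hψint : Integrable ψ := by
    refine phi_integrable.mono' ?_ (ae_of_all _ fun t => ?_)
    · refine Continuous.aestronglyMeasurable ?_
      refine phi_cont.mul (Continuous.sub continuous_const ?_)
      refine Continuous.div continuous_const (by continuity) fun t => by positivity
    · have h1 : (0:ℝ) < (t^2+1)^2 := by positivity
      have h2 : (1:ℝ) ≤ (t^2+1)^2 := by nlinarith [sq_nonneg t]
      have h3 : |1 - 2/(t^2+1)^2| ≤ 1 := by
        rw [abs_le]
        constructor
        · have : 2/(t^2+1)^2 ≤ 2 := by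
            rw [div_le_iff₀ h1]; nlinarith
          linarith
        · have : 0 < 2/(t^2+1)^2 := by positivity
          linarith
      have := phi_pos t
      calc ‖ψ t‖ = gaussPDF t * |1 - 2/(t^2+1)^2| := by
            rw [hψ]; rw [norm_mul]; simp [abs_of_pos this]
        _ ≤ gaussPDF t * 1 := by nlinarith
        _ = gaussPDF t := mul_one _
  have htend : Tendsto (fun s : ℝ => -s * gaussPDF s / (s^2+1)) atBot (𝓝 0) := by
    refine squeeze_zero_norm (fun t => ?_) tendsto_phi_atBot
    have ht1 : (0:ℝ) < t^2+1 := by positivity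
    have := phi_pos t
    have h1 : |t| ≤ t^2+1 := by nlinarith [abs_nonneg t, sq_abs t, sq_nonneg (|t| - 1)]
    rw [norm_div, norm_mul]
    simp only [norm_neg, Real.norm_eq_abs, abs_of_pos this, abs_of_pos ht1]
    rw [div_le_iff₀ ht1]
    nlinarith [mul_le_mul_of_nonneg_right h1 this.le]
  have hint : ∫ t in Iic x, ψ t = -x * gaussPDF x / (x^2+1) := by
    have h := integral_Iic_of_hasDerivAt_of_tendsto' (a := x)
      (fun t _ => hd t) hψint.integrableOn htend
    simpa using h
  have hle : ∫ t in Iic x, ψ t ≤ ∫ t in Iic x, gaussPDF t := by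
    refine integral_mono hψint.integrableOn phi_integrable.integrableOn fun t => ?_
    have := phi_pos t
    have h1 : (0:ℝ) < 2/(t^2+1)^2 := by positivity
    rw [hψ]
    simp only []
    nlinarith
  rw [hint] at hle
  rw [cdf_eq]
  exact hle

lemma sqrt_two_pi_le_three : Real.sqrt (2*π) ≤ 3 := by
  rw [show (3:ℝ) = Real.sqrt 9 by
    rw [show (9:ℝ) = 3^2 by norm_num, Real.sqrt_sq (by norm_num)]]
  exact Real.sqrt_le_sqrt (by nlinarith [Real.pi_lt_d2])

lemma one_le_sqrt_two_pi : 1 ≤ Real.sqrt (2*π) := by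
  rw [show (1:ℝ) = Real.sqrt 1 by simp]
  exact Real.sqrt_le_sqrt (by nlinarith [Real.pi_gt_three])

lemma c_pos : 0 < (Real.sqrt (2*π))⁻¹ := by
  have := one_le_sqrt_two_pi; positivity

lemma c_le_one : (Real.sqrt (2*π))⁻¹ ≤ 1 :=
  inv_le_one_of_one_le₀ one_le_sqrt_two_pi

lemma c_ge : (1:ℝ)/3 ≤ (Real.sqrt (2*π))⁻¹ := by
  have h1 : 0 < Real.sqrt (2*π) := lt_of_lt_of_le one_pos one_le_sqrt_two_pi
  rw [one_div]
  exact inv_anti₀ h1 sqrt_two_pi_le_three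

lemma phi_le (t : ℝ) : gaussPDF t ≤ (Real.sqrt (2*π))⁻¹ := by
  rw [phi_eq]
  have h1 : Real.exp (-(t^2/2)) ≤ 1 := Real.exp_le_one_iff.2 (neg_nonpos.2 (by positivity))
  nlinarith [c_pos]

lemma num_pos (x : ℝ) : 0 < x * gaussPDF x * gaussCDF x + gaussPDF x ^ 2 := by
  rcases le_or_gt 0 x with h | h
  · have h1 : 0 ≤ x * gaussPDF x * gaussCDF x := by
      have := phi_pos x; have := cdf_pos x; positivity
    nlinarith [pow_pos (phi_pos x) 2]
  · have hu := mills_upper h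
    have h1 : gaussCDF x * (-x) < gaussPDF x := by
      rw [← lt_div_iff₀ (by linarith : (0:ℝ) < -x)]
      exact hu
    nlinarith [phi_pos x, cdf_pos x]

lemma cdf_lb {x : ℝ} (hx : -1 ≤ x) : (1:ℝ)/12 ≤ gaussCDF x := by
  have h1 := mills_lower (x := -1) (by norm_num)
  norm_num at h1
  have h2 : (1:ℝ)/6 ≤ gaussPDF (-1) := by
    rw [phi_eq]
    have h3 : ((-1:ℝ))^2/2 = 1/2 := by norm_num
    simp only [h3]
    have h4 : (1:ℝ)/2 ≤ Real.exp (-(1/2)) := by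
      have := Real.add_one_le_exp (-(1/2 : ℝ)); linarith
    nlinarith [c_ge, c_pos]
  calc (1:ℝ)/12 = (1/6)/2 := by norm_num
    _ ≤ gaussPDF (-1) / 2 := by linarith
    _ ≤ gaussCDF (-1) := h1
    _ ≤ gaussCDF x := cdf_mono hx

lemma num_le {x : ℝ} (hx : -1 ≤ x) :
    x * gaussPDF x * gaussCDF x + gaussPDF x ^ 2 ≤ 2 := by
  have hφ := phi_pos x
  have hc := c_pos
  have hφle := phi_le x
  have h2 : gaussPDF x ^ 2 ≤ 1 := by nlinarith [c_le_one]
  have h1 : x * gaussPDF x * gaussCDF x ≤ 1 := by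
    rcases le_or_gt x 0 with h | h
    · have := cdf_pos x
      nlinarith [mul_nonneg (mul_nonneg (neg_nonneg.2 h) hφ.le) this.le]
    · have hΦ1 := cdf_le_one x
      have hΦ0 := cdf_pos x
      have hxe : x ≤ Real.exp (x^2/2) := by
        have := Real.add_one_le_exp (x^2/2); nlinarith [sq_nonneg (x-1)]
      have hxφ : x * gaussPDF x ≤ 1 := by
        rw [phi_eq]
        have hE : Real.exp (-(x^2/2)) * Real.exp (x^2/2) = 1 := by
          rw [← Real.exp_add]; norm_num
        have hEpos : 0 < Real.exp (-(x^2/2)) := Real.exp_pos _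
        have h5 : x * Real.exp (-(x^2/2)) ≤ 1 := by
          nlinarith [mul_le_mul_of_nonneg_right hxe hEpos.le]
        have h6 : 0 < x * Real.exp (-(x^2/2)) := by positivity
        calc x * ((Real.sqrt (2*π))⁻¹ * Real.exp (-(x^2/2)))
            = (Real.sqrt (2*π))⁻¹ * (x * Real.exp (-(x^2/2))) := by ring
          _ ≤ 1 * 1 := by nlinarith [c_le_one]
          _ = 1 := by norm_num
      nlinarith [mul_pos (mul_pos h hφ) hΦ0]
  linarith

lemma G_lt_of_ge {x : ℝ} (hx : -1 ≤ x) : G x < 1000 := by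
  have hL := cdf_lb hx
  have hden : (1:ℝ)/144 ≤ gaussCDF x ^ 2 := by nlinarith [cdf_pos x]
  have hN := num_le hx
  calc G x ≤ 2 / (1/144) := by
        refine div_le_div₀ (by norm_num) hN (by norm_num) hden
    _ < 1000 := by norm_num

lemma G_lt_of_lt {x : ℝ} (hx : x < -1) : G x < 1000 := by
  have hx0 : x < 0 := by linarith
  have hφ := phi_pos x
  have hΦ := cdf_pos x
  have hx2 : (0:ℝ) < x^2+1 := by positivity
  have hl := mills_lower hx0
  have hxne : x ≠ 0 := hx0.ne
  have hbpos : 0 < (-x) * gaussPDF x / (x^2+1) :=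
    div_pos (mul_pos (by linarith) hφ) hx2
  have hnum : x * gaussPDF x * gaussCDF x + gaussPDF x ^ 2 ≤ gaussPDF x ^ 2 / (x^2+1) := by
    have h1 : x * gaussPDF x ≤ 0 := by nlinarith
    have h2 : x * gaussPDF x * gaussCDF x ≤ x * gaussPDF x * ((-x) * gaussPDF x / (x^2+1)) :=
      mul_le_mul_of_nonpos_left hl h1
    have h3 : x * gaussPDF x * ((-x) * gaussPDF x / (x^2+1)) + gaussPDF x ^ 2
        = gaussPDF x ^ 2 / (x^2+1) := by field_simp; ring
    linarith
  have hden : ((-x) * gaussPDF x / (x^2+1)) ^ 2 ≤ gaussCDF x ^ 2 :=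
    pow_le_pow_left₀ hbpos.le hl 2
  have key : G x ≤ (gaussPDF x ^ 2 / (x^2+1)) / (((-x) * gaussPDF x / (x^2+1)) ^ 2) := by
    refine div_le_div₀ (by positivity) hnum (pow_pos hbpos 2) hden
  have heq : (gaussPDF x ^ 2 / (x^2+1)) / (((-x) * gaussPDF x / (x^2+1)) ^ 2)
      = (x^2+1)/x^2 := by
    field_simp
  rw [heq] at key
  have : (x^2+1)/x^2 ≤ 2 := by
    rw [div_le_iff₀ (by positivity)]
    nlinarith
  linarith

/-- **Lemma 3**: `G` is positive everywhere and bounded above by a positive constant. -/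
theorem stmt6 : (∀ x : ℝ, 0 < G x) ∧ ∃ C : ℝ, 0 < C ∧ ∀ x : ℝ, G x < C := by
  refine ⟨fun x => div_pos (num_pos x) (pow_pos (cdf_pos x) 2), 1000, by norm_num, fun x => ?_⟩
  rcases le_or_gt (-1) x with h | h
  · exact G_lt_of_ge h
  · exact G_lt_of_lt h
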